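/- arXiv:2401.09641 — 2 statements merged into one kernel-verified Lean document; each statement's English description precedes it below -/
import Mathlib

section
/- Let e₁ and e₂ be independent real-valued random variables on a probability space with laws gaussianReal 0 σ₁² and gaussianReal 0 σ₂² respectively, let a ∈ ℝ, and assume a²σ₁² + σ₂² > 0. Set X₁ = e₁, X₂ = a·X₁ + e₂, and a' = aσ₁² / (a²σ₁² + σ₂²). Then X₂ and the residual e₂' := X₁ − a'·X₂ are independent. -/
open MeasureTheory ProbabilityTheory Real
open scoped NNReal ENNReal

section Aux

lemma grm_indepFun_const {Ω : Type*} [MeasurableSpace Ω] {P : Measure Ω}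
    [IsProbabilityMeasure P] (f : Ω → ℝ) (c : ℝ) : IndepFun f (fun _ => c) P := by
  rw [indepFun_iff_measure_inter_preimage_eq_mul]
  intro s t _ _
  by_cases hc : c ∈ t
  · have h : (fun _ : Ω => c) ⁻¹' t = Set.univ := by ext; simp [hc]
    rw [h, Set.inter_univ]
    simp
  · have h : (fun _ : Ω => c) ⁻¹' t = ∅ := by ext; simp [hc]
    rw [h, Set.inter_empty]
    simp

lemma grm_map_withDensity_equiv {α β : Type*} [MeasurableSpace α] [MeasurableSpace β]
    (e : α ≃ᵐ β) (μ : Measure α) {f : α → ℝ≥0∞} (hf : Measurable f) :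
    (μ.withDensity f).map e = (μ.map e).withDensity (fun y => f (e.symm y)) := by
  ext s hs
  rw [Measure.map_apply e.measurable hs, withDensity_apply _ (e.measurable hs),
    withDensity_apply _ hs, MeasurableEquiv.restrict_map,
    lintegral_map (f := fun y => f (e.symm y)) (hf.comp e.symm.measurable) e.measurable]
  simp

lemma grm_withDensity_smul (c : ℝ≥0∞) {α : Type*} [MeasurableSpace α] (μ : Measure α)
    {f : α → ℝ≥0∞} (hf : Measurable f) :
    (c • μ).withDensity f = μ.withDensity (fun x => c * f x) := by
  ext s hs
  rw [withDensity_apply _ hs, withDensity_apply _ hs, Measure.restrict_smul,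
    lintegral_smul_measure, lintegral_const_mul c hf, smul_eq_mul]

lemma grm_gaussian_prod_withDensity {v₁ v₂ : ℝ≥0} (hv₁ : v₁ ≠ 0) (hv₂ : v₂ ≠ 0) :
    (gaussianReal 0 v₁).prod (gaussianReal 0 v₂) =
      (volume : Measure (ℝ × ℝ)).withDensity
        (fun p => gaussianPDF 0 v₁ p.1 * gaussianPDF 0 v₂ p.2) := by
  rw [Measure.volume_eq_prod]
  refine Measure.prod_eq fun s t hs ht => ?_
  rw [withDensity_apply _ (hs.prod ht), ← Measure.prod_restrict,
    lintegral_prod_mul (measurable_gaussianPDF _ _).aemeasurable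
      (measurable_gaussianPDF _ _).aemeasurable,
    gaussianReal_apply _ hv₁, gaussianReal_apply _ hv₂]

lemma grm_pdf_transform {v₁ v₂ w₁ w₂ : ℝ≥0} (hv₁ : v₁ ≠ 0) (hv₂ : v₂ ≠ 0)
    (hw₁ : w₁ ≠ 0) (hw₂ : w₂ ≠ 0)
    {α β γ δ : ℝ} (horth : α * γ * (v₁ : ℝ) + β * δ * (v₂ : ℝ) = 0)
    (hD : α * δ - β * γ ≠ 0)
    (hw₁e : (w₁ : ℝ) = α ^ 2 * (v₁ : ℝ) + β ^ 2 * (v₂ : ℝ))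
    (hw₂e : (w₂ : ℝ) = γ ^ 2 * (v₁ : ℝ) + δ ^ 2 * (v₂ : ℝ)) (u w : ℝ) :
    |(α * δ - β * γ)⁻¹| *
      (gaussianPDFReal 0 v₁ ((δ * u - β * w) / (α * δ - β * γ)) *
        gaussianPDFReal 0 v₂ ((α * w - γ * u) / (α * δ - β * γ)))
      = gaussianPDFReal 0 w₁ u * gaussianPDFReal 0 w₂ w := by
  have hv₁' : (0:ℝ) < v₁ := NNReal.coe_pos.mpr (pos_iff_ne_zero.mpr hv₁)
  have hv₂' : (0:ℝ) < v₂ := NNReal.coe_pos.mpr (pos_iff_ne_zero.mpr hv₂)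
  have hw₁' : (0:ℝ) < w₁ := NNReal.coe_pos.mpr (pos_iff_ne_zero.mpr hw₁)
  have hw₂' : (0:ℝ) < w₂ := NNReal.coe_pos.mpr (pos_iff_ne_zero.mpr hw₂)
  have hπ : (0:ℝ) < π := Real.pi_pos
  simp only [gaussianPDFReal, sub_zero]
  have hconst : |(α * δ - β * γ)⁻¹| * ((√(2 * π * v₁))⁻¹ * (√(2 * π * v₂))⁻¹)
      = (√(2 * π * w₁))⁻¹ * (√(2 * π * w₂))⁻¹ := by
    rw [abs_inv, ← mul_inv, ← mul_inv, ← mul_inv]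
    congr 1
    rw [← Real.sqrt_mul (by positivity), ← Real.sqrt_sq_eq_abs,
      ← Real.sqrt_mul (by positivity), ← Real.sqrt_mul (by positivity)]
    congr 1
    rw [hw₁e, hw₂e]
    linear_combination (-(4*π^2)*(α*γ*(v₁:ℝ)+β*δ*(v₂:ℝ))) * horth
  have hexp : rexp (-((δ * u - β * w) / (α * δ - β * γ)) ^ 2 / (2 * v₁)) *
        rexp (-((α * w - γ * u) / (α * δ - β * γ)) ^ 2 / (2 * v₂))
      = rexp (-u ^ 2 / (2 * w₁)) * rexp (-w ^ 2 / (2 * w₂)) := by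
    rw [← Real.exp_add, ← Real.exp_add]
    congr 1
    have hA : α ^ 2 * (v₁:ℝ) + β ^ 2 * (v₂:ℝ) ≠ 0 := by rw [← hw₁e]; exact ne_of_gt hw₁'
    have hB : γ ^ 2 * (v₁:ℝ) + δ ^ 2 * (v₂:ℝ) ≠ 0 := by rw [← hw₂e]; exact ne_of_gt hw₂'
    rw [hw₁e, hw₂e]
    field_simp
    rw [div_eq_iff (pow_ne_zero 2 (by rw [mul_comm δ α]; exact hD))]
    linear_combination (-
      ((α*γ*(v₁:ℝ)+β*δ*(v₂:ℝ)) * (u^2*(γ^2*(v₁:ℝ)+δ^2*(v₂:ℝ)) + w^2*(α^2*(v₁:ℝ)+β^2*(v₂:ℝ)))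
        - 2*u*w*((α^2*(v₁:ℝ)+β^2*(v₂:ℝ))*(γ^2*(v₁:ℝ)+δ^2*(v₂:ℝ))))) * horth
  calc |(α * δ - β * γ)⁻¹| *
        ((√(2 * π * v₁))⁻¹ * rexp (-((δ * u - β * w) / (α * δ - β * γ)) ^ 2 / (2 * v₁)) *
          ((√(2 * π * v₂))⁻¹ * rexp (-((α * w - γ * u) / (α * δ - β * γ)) ^ 2 / (2 * v₂))))
      = (|(α * δ - β * γ)⁻¹| * ((√(2 * π * v₁))⁻¹ * (√(2 * π * v₂))⁻¹)) *
          (rexp (-((δ * u - β * w) / (α * δ - β * γ)) ^ 2 / (2 * v₁)) *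
            rexp (-((α * w - γ * u) / (α * δ - β * γ)) ^ 2 / (2 * v₂))) := by ring
    _ = ((√(2 * π * w₁))⁻¹ * (√(2 * π * w₂))⁻¹) *
          (rexp (-u ^ 2 / (2 * w₁)) * rexp (-w ^ 2 / (2 * w₂))) := by rw [hconst, hexp]
    _ = (√(2 * π * w₁))⁻¹ * rexp (-u ^ 2 / (2 * w₁)) *
          ((√(2 * π * w₂))⁻¹ * rexp (-w ^ 2 / (2 * w₂))) := by ring

end Aux

lemma grm_map_gaussian_prod {v₁ v₂ : ℝ≥0} (hv₁ : v₁ ≠ 0) (hv₂ : v₂ ≠ 0)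
    {α β γ δ : ℝ} (horth : α * γ * (v₁ : ℝ) + β * δ * (v₂ : ℝ) = 0)
    (hD : α * δ - β * γ ≠ 0)
    {w₁ w₂ : ℝ≥0} (hw₁e : (w₁ : ℝ) = α ^ 2 * (v₁ : ℝ) + β ^ 2 * (v₂ : ℝ))
    (hw₂e : (w₂ : ℝ) = γ ^ 2 * (v₁ : ℝ) + δ ^ 2 * (v₂ : ℝ)) :
    Measure.map (fun p : ℝ × ℝ => (α * p.1 + β * p.2, γ * p.1 + δ * p.2))
        ((gaussianReal 0 v₁).prod (gaussianReal 0 v₂))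
      = (gaussianReal 0 w₁).prod (gaussianReal 0 w₂) := by
  have hv₁' : (0:ℝ) < v₁ := NNReal.coe_pos.mpr (pos_iff_ne_zero.mpr hv₁)
  have hv₂' : (0:ℝ) < v₂ := NNReal.coe_pos.mpr (pos_iff_ne_zero.mpr hv₂)
  have hw₁ : w₁ ≠ 0 := by
    intro h
    apply hD
    have h0 : α ^ 2 * (v₁:ℝ) + β ^ 2 * (v₂:ℝ) = 0 := by rw [← hw₁e, h, NNReal.coe_zero]
    have h1 : α ^ 2 * (v₁:ℝ) = 0 := by
      nlinarith [mul_nonneg (sq_nonneg α) hv₁'.le, mul_nonneg (sq_nonneg β) hv₂'.le]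
    have h2 : β ^ 2 * (v₂:ℝ) = 0 := by
      nlinarith [mul_nonneg (sq_nonneg α) hv₁'.le, mul_nonneg (sq_nonneg β) hv₂'.le]
    have hα : α = 0 := (pow_eq_zero_iff two_ne_zero).mp
      ((mul_eq_zero.mp h1).resolve_right (ne_of_gt hv₁'))
    have hβ : β = 0 := (pow_eq_zero_iff two_ne_zero).mp
      ((mul_eq_zero.mp h2).resolve_right (ne_of_gt hv₂'))
    simp [hα, hβ]
  have hw₂ : w₂ ≠ 0 := by
    intro h
    apply hD
    have h0 : γ ^ 2 * (v₁:ℝ) + δ ^ 2 * (v₂:ℝ) = 0 := by rw [← hw₂e, h, NNReal.coe_zero]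
    have h1 : γ ^ 2 * (v₁:ℝ) = 0 := by
      nlinarith [mul_nonneg (sq_nonneg γ) hv₁'.le, mul_nonneg (sq_nonneg δ) hv₂'.le]
    have h2 : δ ^ 2 * (v₂:ℝ) = 0 := by
      nlinarith [mul_nonneg (sq_nonneg γ) hv₁'.le, mul_nonneg (sq_nonneg δ) hv₂'.le]
    have hγ : γ = 0 := (pow_eq_zero_iff two_ne_zero).mp
      ((mul_eq_zero.mp h1).resolve_right (ne_of_gt hv₁'))
    have hδ : δ = 0 := (pow_eq_zero_iff two_ne_zero).mp
      ((mul_eq_zero.mp h2).resolve_right (ne_of_gt hv₂'))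
    simp [hγ, hδ]
  let e : ℝ × ℝ ≃ᵐ ℝ × ℝ :=
  { toFun := fun p => (α * p.1 + β * p.2, γ * p.1 + δ * p.2)
    invFun := fun q => ((δ * q.1 - β * q.2) / (α * δ - β * γ),
      (α * q.2 - γ * q.1) / (α * δ - β * γ))
    left_inv := fun p => by
      obtain ⟨x, y⟩ := p
      simp only [Prod.mk.injEq]
      constructor <;> (rw [div_eq_iff hD]; ring)
    right_inv := fun q => by
      obtain ⟨x, y⟩ := q
      simp only [Prod.mk.injEq]
      constructor <;> (rw [mul_div_assoc', mul_div_assoc', ← add_div, div_eq_iff hD]; ring)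
    measurable_toFun := by
      show Measurable fun p : ℝ × ℝ => (α * p.1 + β * p.2, γ * p.1 + δ * p.2)
      fun_prop
    measurable_invFun := by
      show Measurable fun q : ℝ × ℝ => ((δ * q.1 - β * q.2) / (α * δ - β * γ),
        (α * q.2 - γ * q.1) / (α * δ - β * γ))
      fun_prop }
  have hcoe : ⇑e = fun p : ℝ × ℝ => (α * p.1 + β * p.2, γ * p.1 + δ * p.2) := rfl
  have hsymm : ∀ q : ℝ × ℝ, e.symm q = ((δ * q.1 - β * q.2) / (α * δ - β * γ),
      (α * q.2 - γ * q.1) / (α * δ - β * γ)) := fun _ => rfl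
  have hdet : LinearMap.det
      (Matrix.toLin (Module.Basis.finTwoProd ℝ) (Module.Basis.finTwoProd ℝ) !![α, β; γ, δ])
      = α * δ - β * γ := by
    rw [LinearMap.det_toLin, Matrix.det_fin_two_of]
  have hvol : Measure.map (⇑e) (volume : Measure (ℝ × ℝ))
      = ENNReal.ofReal |(α * δ - β * γ)⁻¹| • volume := by
    have hlin : ⇑e =
        ⇑(Matrix.toLin (Module.Basis.finTwoProd ℝ) (Module.Basis.finTwoProd ℝ) !![α, β; γ, δ]) := by
      funext p
      rw [hcoe]
      simp
    rw [hlin, Measure.map_linearMap_addHaar_eq_smul_addHaar _ (by rw [hdet]; exact hD), hdet]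
  have hF : Measurable (fun p : ℝ × ℝ => gaussianPDF 0 v₁ p.1 * gaussianPDF 0 v₂ p.2) :=
    ((measurable_gaussianPDF _ _).comp measurable_fst).mul
      ((measurable_gaussianPDF _ _).comp measurable_snd)
  calc Measure.map (fun p : ℝ × ℝ => (α * p.1 + β * p.2, γ * p.1 + δ * p.2))
        ((gaussianReal 0 v₁).prod (gaussianReal 0 v₂))
      = Measure.map (⇑e) ((volume : Measure (ℝ × ℝ)).withDensity
          (fun p => gaussianPDF 0 v₁ p.1 * gaussianPDF 0 v₂ p.2)) := by
        rw [grm_gaussian_prod_withDensity hv₁ hv₂, hcoe]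
    _ = (Measure.map (⇑e) volume).withDensity
          (fun q => gaussianPDF 0 v₁ (e.symm q).1 * gaussianPDF 0 v₂ (e.symm q).2) :=
        grm_map_withDensity_equiv e _ hF
    _ = (volume : Measure (ℝ × ℝ)).withDensity
          (fun q => ENNReal.ofReal |(α * δ - β * γ)⁻¹| *
            (gaussianPDF 0 v₁ (e.symm q).1 * gaussianPDF 0 v₂ (e.symm q).2)) := by
        rw [hvol, grm_withDensity_smul _ _
          (f := fun q : ℝ × ℝ => gaussianPDF 0 v₁ (e.symm q).1 * gaussianPDF 0 v₂ (e.symm q).2)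
          (hF.comp e.symm.measurable)]
    _ = (volume : Measure (ℝ × ℝ)).withDensity
          (fun q => gaussianPDF 0 w₁ q.1 * gaussianPDF 0 w₂ q.2) := by
        congr 1
        funext q
        rw [hsymm q]
        simp only [gaussianPDF]
        rw [← ENNReal.ofReal_mul (gaussianPDFReal_nonneg _ _ _),
          ← ENNReal.ofReal_mul (abs_nonneg _),
          grm_pdf_transform hv₁ hv₂ hw₁ hw₂ horth hD hw₁e hw₂e,
          ENNReal.ofReal_mul (gaussianPDFReal_nonneg _ _ _)]
    _ = (gaussianReal 0 w₁).prod (gaussianReal 0 w₂) :=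
        (grm_gaussian_prod_withDensity hw₁ hw₂).symm

/-- **Non-identifiability of LiNGAM with Gaussian noise (two variables).**
If `e₁, e₂` are independent centered Gaussian noises, `X₁ = e₁` and
`X₂ = a X₁ + e₂`, then with `a' = a σ₁² / (a² σ₁² + σ₂²)` the reverse model holds:
`X₂` is independent of the residual `e₂' = X₁ - a' X₂`. -/
theorem gaussian_reverse_model_independent
    {Ω : Type*} [MeasurableSpace Ω] (P : Measure Ω) [IsProbabilityMeasure P]
    (e₁ e₂ : Ω → ℝ) (hme₁ : Measurable e₁) (hme₂ : Measurable e₂)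
    (hindep : IndepFun e₁ e₂ P)
    (v₁ v₂ : ℝ≥0)
    (hlaw₁ : Measure.map e₁ P = gaussianReal 0 v₁)
    (hlaw₂ : Measure.map e₂ P = gaussianReal 0 v₂)
    (a : ℝ) (hpos : 0 < a ^ 2 * (v₁ : ℝ) + (v₂ : ℝ)) :
    IndepFun (fun ω => a * e₁ ω + e₂ ω)
      (fun ω => e₁ ω - (a * (v₁ : ℝ) / (a ^ 2 * (v₁ : ℝ) + (v₂ : ℝ))) *
        (a * e₁ ω + e₂ ω)) P := by
  by_cases hv₁ : v₁ = 0
  ·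
    subst hv₁
    have hμ : P (e₁ ⁻¹' {(0:ℝ)}ᶜ) = 0 := by
      rw [← Measure.map_apply hme₁ (measurableSet_singleton (0:ℝ)).compl, hlaw₁,
        gaussianReal_zero_var, Measure.dirac_apply' _ (measurableSet_singleton (0:ℝ)).compl]
      simp
    have h0 : e₁ =ᵐ[P] fun _ => (0:ℝ) := by
      rw [Filter.EventuallyEq, ae_iff]
      convert hμ using 2
      rfl
    simp only [NNReal.coe_zero, mul_zero, zero_div, zero_mul, sub_zero]
    exact IndepFun.congr (grm_indepFun_const (fun ω => a * e₁ ω + e₂ ω) 0)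
      (Filter.EventuallyEq.refl _ _) h0.symm
  by_cases hv₂ : v₂ = 0
  · subst hv₂
    have hv₁' : (0:ℝ) < v₁ := NNReal.coe_pos.mpr (pos_iff_ne_zero.mpr hv₁)
    have ha : a ≠ 0 := by
      intro h
      rw [h] at hpos
      simp at hpos
    have hμ : P (e₂ ⁻¹' {(0:ℝ)}ᶜ) = 0 := by
      rw [← Measure.map_apply hme₂ (measurableSet_singleton (0:ℝ)).compl, hlaw₂,
        gaussianReal_zero_var, Measure.dirac_apply' _ (measurableSet_singleton (0:ℝ)).compl]
      simp
    have h0 : e₂ =ᵐ[P] fun _ => (0:ℝ) := by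
      rw [Filter.EventuallyEq, ae_iff]
      convert hμ using 2
      rfl
    have hT : (fun ω => e₁ ω - (a * ((v₁:ℝ≥0) : ℝ) / (a ^ 2 * ((v₁:ℝ≥0) : ℝ) + ((0:ℝ≥0) : ℝ))) *
        (a * e₁ ω + e₂ ω)) =ᵐ[P] fun _ => (0:ℝ) := by
      filter_upwards [h0] with ω h
      rw [h, add_zero, NNReal.coe_zero, add_zero]
      field_simp
      ring
    exact IndepFun.congr (grm_indepFun_const (fun ω => a * e₁ ω + e₂ ω) 0)
      (Filter.EventuallyEq.refl _ _) hT.symm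
  -- main case
  have hv₁' : (0:ℝ) < v₁ := NNReal.coe_pos.mpr (pos_iff_ne_zero.mpr hv₁)
  have hv₂' : (0:ℝ) < v₂ := NNReal.coe_pos.mpr (pos_iff_ne_zero.mpr hv₂)
  have hs : a ^ 2 * (v₁ : ℝ) + (v₂ : ℝ) ≠ 0 := ne_of_gt hpos
  set c : ℝ := a * (v₁ : ℝ) / (a ^ 2 * (v₁ : ℝ) + (v₂ : ℝ)) with hc
  have hmS : Measurable fun ω => a * e₁ ω + e₂ ω := (hme₁.const_mul a).add hme₂
  have hmT : Measurable fun ω => e₁ ω - c * (a * e₁ ω + e₂ ω) :=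
    hme₁.sub (((hme₁.const_mul a).add hme₂).const_mul c)
  rw [indepFun_iff_map_prod_eq_prod_map_map hmS.aemeasurable hmT.aemeasurable]
  have hjointe : Measure.map (fun ω => (e₁ ω, e₂ ω)) P
      = (gaussianReal 0 v₁).prod (gaussianReal 0 v₂) := by
    rw [← hlaw₁, ← hlaw₂]
    exact (indepFun_iff_map_prod_eq_prod_map_map hme₁.aemeasurable hme₂.aemeasurable).mp hindep
  have horth : a * (1 - c * a) * (v₁:ℝ) + 1 * (-c) * (v₂:ℝ) = 0 := by
    rw [hc]
    field_simp
    ring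
  have hDval : a * (-c) - 1 * (1 - c * a) = -1 := by ring
  have hD : a * (-c) - 1 * (1 - c * a) ≠ 0 := by rw [hDval]; norm_num
  set w₁ : ℝ≥0 := ⟨a ^ 2 * (v₁:ℝ) + (v₂:ℝ), le_of_lt hpos⟩ with hw₁def
  set w₂ : ℝ≥0 := ⟨(1 - c * a) ^ 2 * (v₁:ℝ) + (-c) ^ 2 * (v₂:ℝ), by positivity⟩ with hw₂def
  have hw₁e : (w₁ : ℝ) = a ^ 2 * (v₁:ℝ) + 1 ^ 2 * (v₂:ℝ) := by rw [hw₁def]; norm_num; rfl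
  have hw₂e : (w₂ : ℝ) = (1 - c * a) ^ 2 * (v₁:ℝ) + (-c) ^ 2 * (v₂:ℝ) := rfl
  have hmain : Measure.map (fun ω => (a * e₁ ω + e₂ ω,
        e₁ ω - c * (a * e₁ ω + e₂ ω))) P
      = (gaussianReal 0 w₁).prod (gaussianReal 0 w₂) := by
    have hcomp : (fun ω => (a * e₁ ω + e₂ ω, e₁ ω - c * (a * e₁ ω + e₂ ω)))
        = (fun p : ℝ × ℝ => (a * p.1 + 1 * p.2, (1 - c * a) * p.1 + (-c) * p.2)) ∘
          (fun ω => (e₁ ω, e₂ ω)) := by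
      funext ω
      simp only [Function.comp_apply, Prod.mk.injEq]
      constructor <;> ring
    rw [hcomp, ← Measure.map_map (by fun_prop) (hme₁.prodMk hme₂), hjointe]
    exact grm_map_gaussian_prod hv₁ hv₂ horth hD hw₁e hw₂e
  have hS : Measure.map (fun ω => a * e₁ ω + e₂ ω) P = gaussianReal 0 w₁ := by
    have h := congrArg (Measure.map Prod.fst) hmain
    rw [Measure.map_map measurable_fst (hmS.prodMk hmT)] at h
    rw [Measure.map_fst_prod, measure_univ, one_smul] at h
    exact h
  have hT : Measure.map (fun ω => e₁ ω - c * (a * e₁ ω + e₂ ω)) P = gaussianReal 0 w₂ := by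
    have h := congrArg (Measure.map Prod.snd) hmain
    rw [Measure.map_map measurable_snd (hmS.prodMk hmT)] at h
    rw [Measure.map_snd_prod, measure_univ, one_smul] at h
    exact h
  rw [hmain, hS, hT]
end

section
/- Let S and K be real symmetric m×m matrices with S positive semidefinite and K positive definite, and let M be a real m×m matrix satisfying M(S + K) = S. Then every real eigenvalue λ of M satisfies 0 ≤ λ < 1. -/
open Matrix

/-- **Spectral bound for `M = S (S + K)⁻¹`.** If `S` is real symmetric
positive semidefinite, `K` is real symmetric positive definite, and
`M (S + K) = S`, then every real eigenvalue `λ` of `M` satisfies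
`0 ≤ λ < 1`. -/
theorem eigenvalue_bound_of_psd_pd
    {m : ℕ} (S K M : Matrix (Fin m) (Fin m) ℝ)
    (hS : S.PosSemidef) (hK : K.PosDef)
    (hM : M * (S + K) = S) :
    ∀ (l : ℝ) (u : Fin m → ℝ), u ≠ 0 → M.mulVec u = l • u → 0 ≤ l ∧ l < 1 := by
  intro l u hu hMu
  have hSK : (S + K).PosDef := Matrix.PosDef.posSemidef_add hS hK
  have hunit : IsUnit (S + K) := hSK.isUnit
  haveI := hunit.invertible
  set w : Fin m → ℝ := (S + K)⁻¹.mulVec u with hw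
  have huw : (S + K).mulVec w = u := by
    rw [hw, mulVec_mulVec, Matrix.mul_nonsing_inv _ (isUnit_iff_isUnit_det _ |>.1 hunit),
      one_mulVec]
  have hwne : w ≠ 0 := by
    intro h
    apply hu
    rw [← huw, h, mulVec_zero]
  have hSw : S.mulVec w = l • (S + K).mulVec w := by
    rw [huw, ← hM, ← mulVec_mulVec, huw, hMu]
  -- take dot products
  have key : w ⬝ᵥ S.mulVec w = l * (w ⬝ᵥ S.mulVec w + w ⬝ᵥ K.mulVec w) := by
    calc w ⬝ᵥ S.mulVec w = w ⬝ᵥ (l • (S + K).mulVec w) := by rw [hSw]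
    _ = l * (w ⬝ᵥ (S + K).mulVec w) := by rw [dotProduct_smul, smul_eq_mul]
    _ = l * (w ⬝ᵥ S.mulVec w + w ⬝ᵥ K.mulVec w) := by
        rw [add_mulVec, dotProduct_add]
  have ha : 0 ≤ w ⬝ᵥ S.mulVec w := by have := hS.dotProduct_mulVec_nonneg w; rwa [star_trivial] at this
  have hb : 0 < w ⬝ᵥ K.mulVec w := by have := hK.dotProduct_mulVec_pos hwne; rwa [star_trivial] at this
  set a := w ⬝ᵥ S.mulVec w
  set b := w ⬝ᵥ K.mulVec w
  have hab : 0 < a + b := by linarith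
  constructor
  · nlinarith
  · nlinarith
end
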